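/- Let S be a Rees matrix semigroup and p, q polynomials (products of variables and constants from S) over S. If the directed graphs G(p) and G(q) are equal, then Z(p) = Z(q), i.e., p and q vanish on exactly the same tuples of arguments. -/

import Mathlib

/-- Multiplication in the Rees matrix semigroup `M(G, M)` (zero modeled as `none`). -/
def reesMul {I Λ G : Type} [Mul G] (M : Λ → I → Option G) :
    Option (I × G × Λ) → Option (I × G × Λ) → Option (I × G × Λ)
  | some (i, g, l), some (j, h, c) => (M l j).map fun m => (i, g * m * h, c)
  | _, _ => none

/-- Product of a nonempty list. -/
def prodWith {α : Type} (f : α → α → α) : List α → Option α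
  | [] => none
  | a :: t => some (t.foldl f a)

/-- `a`, `b` occur as a consecutive pair (i.e. `ab` syntactically divides `w`). -/
def consec {α : Type} (w : List α) (a b : α) : Prop :=
  ∃ l₁ l₂ : List α, w = l₁ ++ a :: b :: l₂

theorem List.chain'_cons {α : Type} {R : α → α → Prop} {x y : α} {l : List α} :
    List.Chain' R (x :: y :: l) ↔ R x y ∧ List.Chain' R (y :: l) :=
  List.isChain_cons_cons

theorem List.chain'_cons' {α : Type} {R : α → α → Prop} {x : α} {l : List α} :
    List.Chain' R (x :: l) ↔ (∀ y ∈ List.head? l, R x y) ∧ List.Chain' R l :=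
  List.isChain_cons

section aux
variable {I Λ G : Type} [Group G] (M : Λ → I → Option G)

lemma reesMul_none_left (x : Option (I × G × Λ)) : reesMul M none x = none := by
  rcases x with _ | ⟨i, g, l⟩ <;> rfl

lemma reesMul_none_right (x : Option (I × G × Λ)) : reesMul M x none = none := by
  rcases x with _ | ⟨i, g, l⟩ <;> rfl

lemma reesMul_sameΛ (i g i' g' : _) (l : Λ) (y : Option (I × G × Λ)) :
    (reesMul M (some (i, g, l)) y = none ↔ reesMul M (some (i', g', l)) y = none) := by
  rcases y with _ | ⟨j, h, c⟩
  · simp [reesMul_none_right]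
  · simp [reesMul, Option.map_eq_none_iff]

lemma core : ∀ (t : List (Option (I × G × Λ))) (a : Option (I × G × Λ)),
    t.foldl (reesMul M) a ≠ none ↔
      (a ≠ none ∧ (∀ c ∈ t, c ≠ none) ∧
        List.Chain' (fun x y => reesMul M x y ≠ none) (a :: t)) := by
  intro t
  induction t with
  | nil => intro a; simp [List.Chain']
  | cons b t ih =>
    intro a
    rw [List.foldl_cons, ih]
    constructor
    · rintro ⟨hab, ht, hch⟩
      have ha : a ≠ none := by rintro rfl; exact hab (reesMul_none_left M b)
      have hb : b ≠ none := by rintro rfl; exact hab (reesMul_none_right M a)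
      obtain ⟨⟨ia, ga, la⟩, rfl⟩ := Option.ne_none_iff_exists'.mp ha
      obtain ⟨⟨jb, hb', cb⟩, rfl⟩ := Option.ne_none_iff_exists'.mp hb
      obtain ⟨m, hm⟩ : ∃ m, M la jb = some m := by
        rcases h : M la jb with _ | m
        · exact absurd (by simp [reesMul, h]) hab
        · exact ⟨m, rfl⟩
      have hr : reesMul M (some (ia, ga, la)) (some (jb, hb', cb))
          = some (ia, ga * m * hb', cb) := by simp [reesMul, hm]
      refine ⟨by simp, by simpa using ht, ?_⟩
      rw [List.chain'_cons, List.chain'_cons']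
      rw [hr, List.chain'_cons'] at hch
      refine ⟨hab, fun y hy hn => ?_, hch.2⟩
      exact (hch.1 y hy) ((reesMul_sameΛ M _ _ _ _ _ y).mpr hn)
    · rintro ⟨ha, ht, hch⟩
      have hb : b ≠ none := ht b (by simp)
      rw [List.chain'_cons'] at hch
      have hab : reesMul M a b ≠ none := hch.1 b (by simp)
      obtain ⟨⟨ia, ga, la⟩, rfl⟩ := Option.ne_none_iff_exists'.mp ha
      obtain ⟨⟨jb, hb', cb⟩, rfl⟩ := Option.ne_none_iff_exists'.mp hb
      obtain ⟨m, hm⟩ : ∃ m, M la jb = some m := by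
        rcases h : M la jb with _ | m
        · exact absurd (by simp [reesMul, h]) hab
        · exact ⟨m, rfl⟩
      have hr : reesMul M (some (ia, ga, la)) (some (jb, hb', cb))
          = some (ia, ga * m * hb', cb) := by simp [reesMul, hm]
      refine ⟨hab, fun c hc => ht c (by simp [hc]), ?_⟩
      rw [hr, List.chain'_cons']
      have h2 := List.chain'_cons'.mp hch.2
      refine ⟨fun y hy hn => ?_, h2.2⟩
      exact h2.1 y hy ((reesMul_sameΛ M _ _ _ _ _ y).mp hn)

end aux

lemma consec_cons {α : Type} (x : α) (w : List α) (a b : α) :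
    consec (x :: w) a b ↔ (x = a ∧ w.head? = some b) ∨ consec w a b := by
  constructor
  · rintro ⟨l₁, l₂, h⟩
    rcases l₁ with _ | ⟨y, l₁⟩
    · simp only [List.nil_append, List.cons.injEq] at h
      exact Or.inl ⟨h.1, by rw [h.2]; rfl⟩
    · simp only [List.cons_append, List.cons.injEq] at h
      exact Or.inr ⟨l₁, l₂, h.2⟩
  · rintro (⟨rfl, hh⟩ | ⟨l₁, l₂, rfl⟩)
    · rcases w with _ | ⟨y, w⟩
      · simp at hh
      · simp only [List.head?_cons, Option.some.injEq] at hh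
        exact ⟨[], w, by simp [hh]⟩
    · exact ⟨x :: l₁, l₂, rfl⟩

lemma consec_nil {α : Type} (a b : α) : ¬ consec [] a b := by
  rintro ⟨l₁, l₂, h⟩; simp at h

lemma chain'_iff_consec {α : Type} (R : α → α → Prop) :
    ∀ w : List α, List.Chain' R w ↔ ∀ a b, consec w a b → R a b := by
  intro w
  induction w with
  | nil => simp [consec_nil, List.Chain']
  | cons x w ih =>
    rw [List.chain'_cons', ih]
    constructor
    · rintro ⟨h1, h2⟩ a b hab
      rcases (consec_cons x w a b).mp hab with ⟨rfl, hh⟩ | h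
      · exact h1 b hh
      · exact h2 a b h
    · intro h
      refine ⟨fun y hy => h x y ((consec_cons x w x y).mpr (Or.inl ⟨rfl, hy⟩)), ?_⟩
      intro a b hab
      exact h a b ((consec_cons x w a b).mpr (Or.inr hab))

lemma consec_map {α β : Type} (f : α → β) :
    ∀ (w : List α) (a b : β),
      consec (w.map f) a b ↔ ∃ c d, consec w c d ∧ f c = a ∧ f d = b := by
  intro w
  induction w with
  | nil => intro a b; simp [consec_nil]
  | cons x w ih =>
    intro a b
    rw [List.map_cons, consec_cons, ih]
    constructor
    · rintro (⟨rfl, hh⟩ | ⟨c, d, hcd, rfl, rfl⟩)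
      · rw [List.head?_map] at hh
        rcases w with _ | ⟨y, w⟩
        · simp at hh
        · simp only [List.head?_cons, Option.map_some, Option.some.injEq] at hh
          exact ⟨x, y, (consec_cons x (y :: w) x y).mpr (Or.inl ⟨rfl, rfl⟩), rfl, hh⟩
      · exact ⟨c, d, (consec_cons x w c d).mpr (Or.inr hcd), rfl, rfl⟩
    · rintro ⟨c, d, hcd, rfl, rfl⟩
      rcases (consec_cons x w c d).mp hcd with ⟨rfl, hh⟩ | h
      · exact Or.inl ⟨rfl, by rw [List.head?_map, hh]; rfl⟩
      · exact Or.inr ⟨c, d, h, rfl, rfl⟩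

lemma main_iff {I Λ G α : Type} [Group G] (M : Λ → I → Option G)
    (F : α → Option (I × G × Λ)) (w : List α) (hw : w ≠ []) :
    (prodWith (reesMul M) (w.map F) = some none ↔
      ¬ ((∀ c ∈ w, F c ≠ none) ∧
         ∀ c d, consec w c d → reesMul M (F c) (F d) ≠ none)) := by
  rcases w with _ | ⟨x, w⟩
  · exact absurd rfl hw
  rw [List.map_cons, show prodWith (reesMul M) (F x :: w.map F)
      = some ((w.map F).foldl (reesMul M) (F x)) from rfl]
  rw [Option.some_inj, ← not_ne_iff]
  apply not_congr
  rw [core M, chain'_iff_consec]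
  constructor
  · rintro ⟨h1, h2, h3⟩
    refine ⟨?_, ?_⟩
    · intro c hc
      rcases hc with _ | hc
      · exact h1
      · exact h2 (F c) (List.mem_map_of_mem (by assumption))
    · intro c d hcd
      exact h3 (F c) (F d) ((consec_map F (x :: w) (F c) (F d)).mpr ⟨c, d, hcd, rfl, rfl⟩)
  · rintro ⟨h1, h2⟩
    refine ⟨h1 x (by simp), ?_, ?_⟩
    · intro c hc
      obtain ⟨c', hc', rfl⟩ := List.mem_map.mp hc
      exact h1 c' (by simp [hc'])
    · intro a b hab
      obtain ⟨c, d, hcd, rfl, rfl⟩ := (consec_map F (x :: w) a b).mp hab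
      exact h2 c d hcd

/-- Lemma 2.4: if two polynomials `p`, `q` over a Rees matrix semigroup (words in
variables from `V` and constants from `S`) have the same graph `G(p) = G(q)` (same
vertices, i.e. occurring symbols, and same edges), then `Z(p) = Z(q)`: they vanish
on exactly the same evaluations. -/
theorem stmt9 {I Λ G V : Type} [Group G] (M : Λ → I → Option G)
    (p q : List (V ⊕ Option (I × G × Λ))) (hp : p ≠ []) (hq : q ≠ [])
    (hvert : ∀ c, c ∈ p ↔ c ∈ q)
    (hedge : ∀ c d, consec p c d ↔ consec q c d) :
    ∀ e : V → Option (I × G × Λ),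
      (prodWith (reesMul M) (p.map (Sum.elim e id)) = some none ↔
       prodWith (reesMul M) (q.map (Sum.elim e id)) = some none) := by
  intro e
  rw [main_iff M _ p hp, main_iff M _ q hq]
  apply not_congr
  apply and_congr
  · exact forall_congr' fun c => imp_congr (hvert c) Iff.rfl
  · exact forall_congr' fun c => forall_congr' fun d => imp_congr (hedge c d) Iff.rfl
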